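/- Let E_ω, B_ω satisfy the stationary variational equations ∫E_ω·e dx = ω·∫x∧(e∧B_ω)dx = 0 and ∫B_ω·b dx − ω·∫x∧(E_ω∧b)dx = 0 for all admissible divergence-free perturbations e, b, and suppose Iω = M − ∫x∧(E_ω∧B_ω)dx. Then the increment of the reduced energy H_M(E,B) = (1/(2I))(M − ∫x∧(E∧B)dx)² + (1/2)∫(|E|²+|B|²)dx satisfies H_M(E_ω+e, B_ω+b) − H_M(E_ω, B_ω) = (1/(2I)) m² − ω·m₃ + (1/2)∫(|e|²+|b|²)dx, where m = m₁+m₂+m₃ with m₁ = ∫x∧(E_ω∧b)dx, m₂ = ∫x∧(e∧B_ω)dx, m₃ = ∫x∧(e∧b)dx. -/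

import Mathlib

open MeasureTheory Matrix

/-- Field momentum integral `∫ x ∧ (F(x) ∧ G(x)) dx`. -/
noncomputable def mom3 (F G : (Fin 3 → ℝ) → (Fin 3 → ℝ)) : Fin 3 → ℝ :=
  ∫ x : Fin 3 → ℝ, crossProduct x (crossProduct (F x) (G x))

/-- Squared Euclidean length. -/
def esq (v : Fin 3 → ℝ) : ℝ := ∑ i, v i ^ 2

/-- Reduced energy on the surface of constant angular momentum `M`. -/
noncomputable def HM (I : ℝ) (M : Fin 3 → ℝ) (E B : (Fin 3 → ℝ) → (Fin 3 → ℝ)) : ℝ :=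
  (1 / (2 * I)) * esq (M - mom3 E B) +
    (1 / 2) * ∫ x : Fin 3 → ℝ, (esq (E x) + esq (B x))

lemma memLp_proj {f : (Fin 3 → ℝ) → (Fin 3 → ℝ)} (i : Fin 3)
    (hf : MemLp f 2 (volume : Measure (Fin 3 → ℝ))) :
    MemLp (fun x => f x i) 2 (volume : Measure (Fin 3 → ℝ)) :=
  (ContinuousLinearMap.proj (R := ℝ) (φ := fun _ : Fin 3 => ℝ) i).comp_memLp' hf

lemma integrable_dot {f g : (Fin 3 → ℝ) → (Fin 3 → ℝ)}
    (hf : MemLp f 2 (volume : Measure (Fin 3 → ℝ)))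
    (hg : MemLp g 2 (volume : Measure (Fin 3 → ℝ))) :
    Integrable (fun x => f x ⬝ᵥ g x) := by
  have : ∀ i : Fin 3, Integrable (fun x => f x i * g x i) := by
    intro i
    have h := (memLp_proj i hg).smul (memLp_proj i hf)
      (r := 1) (hpqr := ⟨by norm_num [ENNReal.inv_two_add_inv_two]⟩)
    rw [memLp_one_iff_integrable] at h
    simpa [smul_eq_mul, Pi.mul_def] using h
  simpa [dotProduct] using (integrable_finset_sum Finset.univ fun i _ => this i)

lemma integrable_esq {f : (Fin 3 → ℝ) → (Fin 3 → ℝ)}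
    (hf : MemLp f 2 (volume : Measure (Fin 3 → ℝ))) :
    Integrable (fun x => esq (f x)) := by
  simpa [esq] using
    (integrable_finset_sum Finset.univ fun i _ => (memLp_proj i hf).integrable_sq)

lemma esq_sub (u v : Fin 3 → ℝ) : esq (u - v) = esq u - 2 * (u ⬝ᵥ v) + esq v := by
  simp only [esq, dotProduct, Pi.sub_apply, Finset.mul_sum, ← Finset.sum_add_distrib,
    ← Finset.sum_sub_distrib]
  exact Finset.sum_congr rfl fun i _ => by ring

lemma esq_add (u v : Fin 3 → ℝ) : esq (u + v) = esq u + 2 * (u ⬝ᵥ v) + esq v := by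
  simp only [esq, dotProduct, Pi.add_apply, Finset.mul_sum, ← Finset.sum_add_distrib]
  exact Finset.sum_congr rfl fun i _ => by ring

/-- Expansion of the reduced-energy increment at the soliton: using the two
stationary variational equations, all terms linear in `(e, b)` cancel and
`H_M(E_ω+e,B_ω+b) − H_M(E_ω,B_ω) = m²/(2I) − ω·m₃ + (1/2)∫(|e|²+|b|²)dx`. -/
theorem stmt15 (I : ℝ) (hI : 0 < I) (M ω : Fin 3 → ℝ)
    (Eω Bω e b : (Fin 3 → ℝ) → (Fin 3 → ℝ))
    (hEω : MemLp Eω 2 (volume : Measure (Fin 3 → ℝ)))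
    (hBω : MemLp Bω 2 (volume : Measure (Fin 3 → ℝ)))
    (he : MemLp e 2 (volume : Measure (Fin 3 → ℝ)))
    (hb : MemLp b 2 (volume : Measure (Fin 3 → ℝ)))
    (hiEB : Integrable (fun x => crossProduct x (crossProduct (Eω x) (Bω x))))
    (hi1 : Integrable (fun x => crossProduct x (crossProduct (Eω x) (b x))))
    (hi2 : Integrable (fun x => crossProduct x (crossProduct (e x) (Bω x))))
    (hi3 : Integrable (fun x => crossProduct x (crossProduct (e x) (b x))))
    (hvar1 : ∫ x : Fin 3 → ℝ, (Eω x) ⬝ᵥ (e x) = 0)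
    (hvar1' : ω ⬝ᵥ mom3 e Bω = 0)
    (hvar2 : (∫ x : Fin 3 → ℝ, (Bω x) ⬝ᵥ (b x)) - ω ⬝ᵥ mom3 Eω b = 0)
    (hsol : I • ω = M - mom3 Eω Bω) :
    HM I M (Eω + e) (Bω + b) - HM I M Eω Bω =
      (1 / (2 * I)) * esq (mom3 Eω b + mom3 e Bω + mom3 e b) -
        ω ⬝ᵥ mom3 e b +
        (1 / 2) * ∫ x : Fin 3 → ℝ, (esq (e x) + esq (b x)) := by
  set m1 := mom3 Eω b
  set m2 := mom3 e Bω
  set m3 := mom3 e b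
  set m := m1 + m2 + m3 with hm
  -- Step 1: additivity of the field momentum
  have hmom : mom3 (Eω + e) (Bω + b) = mom3 Eω Bω + m := by
    unfold mom3
    have hcong : (fun x => crossProduct x (crossProduct ((Eω + e) x) ((Bω + b) x))) =
        fun x => crossProduct x (crossProduct (Eω x) (Bω x)) +
          (crossProduct x (crossProduct (Eω x) (b x)) +
            crossProduct x (crossProduct (e x) (Bω x)) +
            crossProduct x (crossProduct (e x) (b x))) := by
      funext x
      simp only [Pi.add_apply, map_add, LinearMap.add_apply]
      abel
    have h23 : Integrable (fun x => (crossProduct x) ((crossProduct (Eω x)) (b x)) +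
        (crossProduct x) ((crossProduct (e x)) (Bω x))) := hi1.add hi2
    have h234 : Integrable (fun x => (crossProduct x) ((crossProduct (Eω x)) (b x)) +
        (crossProduct x) ((crossProduct (e x)) (Bω x)) +
        (crossProduct x) ((crossProduct (e x)) (b x))) := h23.add hi3
    rw [hcong, integral_add hiEB h234, integral_add h23 hi3, integral_add hi1 hi2]
    rfl
  -- integrabilities for the energy
  have iEB : Integrable (fun x => esq (Eω x) + esq (Bω x)) :=
    (integrable_esq hEω).add (integrable_esq hBω)
  have ieb : Integrable (fun x => esq (e x) + esq (b x)) :=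
    (integrable_esq he).add (integrable_esq hb)
  have idE : Integrable (fun x => Eω x ⬝ᵥ e x) := integrable_dot hEω he
  have idB : Integrable (fun x => Bω x ⬝ᵥ b x) := integrable_dot hBω hb
  -- Step 2: expansion of the energy integral
  have henergy : (∫ x : Fin 3 → ℝ, (esq ((Eω + e) x) + esq ((Bω + b) x))) =
      (∫ x : Fin 3 → ℝ, (esq (Eω x) + esq (Bω x))) +
        2 * (∫ x : Fin 3 → ℝ, Eω x ⬝ᵥ e x) + 2 * (∫ x : Fin 3 → ℝ, Bω x ⬝ᵥ b x) +
        ∫ x : Fin 3 → ℝ, (esq (e x) + esq (b x)) := by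
    have hcong : (fun x => esq ((Eω + e) x) + esq ((Bω + b) x)) =
        fun x => (esq (Eω x) + esq (Bω x)) +
          (2 * (Eω x ⬝ᵥ e x) + 2 * (Bω x ⬝ᵥ b x)) + (esq (e x) + esq (b x)) := by
      funext x
      simp only [Pi.add_apply, esq_add]
      ring
    have hd2 : Integrable (fun x => 2 * (Eω x ⬝ᵥ e x) + 2 * (Bω x ⬝ᵥ b x)) :=
      (idE.const_mul 2).add (idB.const_mul 2)
    have hall : Integrable (fun x => (esq (Eω x) + esq (Bω x)) +
        (2 * (Eω x ⬝ᵥ e x) + 2 * (Bω x ⬝ᵥ b x))) := iEB.add hd2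
    rw [hcong, integral_add hall ieb, integral_add iEB hd2,
      integral_add (idE.const_mul 2) (idB.const_mul 2),
      integral_const_mul, integral_const_mul]
    ring
  -- Step 3: quadratic expansion
  have hq : esq (M - mom3 (Eω + e) (Bω + b)) =
      esq (M - mom3 Eω Bω) - 2 * (I * (ω ⬝ᵥ m)) + esq m := by
    rw [hmom, ← sub_sub, esq_sub, ← hsol, smul_dotProduct, smul_eq_mul]
  have hωm : ω ⬝ᵥ m = ω ⬝ᵥ m1 + ω ⬝ᵥ m2 + ω ⬝ᵥ m3 := by
    simp [hm, dotProduct_add]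
  have hBb : (∫ x : Fin 3 → ℝ, Bω x ⬝ᵥ b x) = ω ⬝ᵥ m1 := by linarith [hvar2]
  unfold HM
  rw [hq, henergy, hvar1, hBb, hωm, hvar1']
  field_simp
  ring
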